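/- Let p be a prime and q = p^k with k ≥ 1, and let G = SL(2, F_q). A reducible character ψ of G of degree q is p-vanishing if and only if ψ is Syl_p-vanishing and ψ(z) = ψ(1) for every element z of the center of G. -/

import Mathlib

open scoped ComplexOrder

noncomputable section

/-- `χ : G → ℂ` is the character of some finite-dimensional complex representation of `G`. -/
def IsChar (G : Type) [Group G] (χ : G → ℂ) : Prop :=
  ∃ V : FDRep ℂ G, χ = V.character

/-- `χ` is the character of an irreducible finite-dimensional complex representation of `G`. -/
def IsIrredChar (G : Type) [Group G] (χ : G → ℂ) : Prop :=
  ∃ V : FDRep ℂ G, CategoryTheory.Simple V ∧ χ = V.character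

/-- `χ` is `p`-vanishing: it vanishes at every element whose order is divisible by `p`. -/
def PVanishing (G : Type) [Group G] (p : ℕ) (χ : G → ℂ) : Prop :=
  ∀ g : G, p ∣ orderOf g → χ g = 0

/-- `χ` is `Syl_p`-vanishing: it vanishes at every nonidentity element of `p`-power order. -/
def SylPVanishing (G : Type) [Group G] (p : ℕ) (χ : G → ℂ) : Prop :=
  ∀ g : G, g ≠ 1 → (∃ m : ℕ, orderOf g = p ^ m) → χ g = 0

/-- The standard inner product of complex class functions on a finite group:
`⟨α, β⟩ = |G|⁻¹ ∑ g, α g * conj (β g)`. -/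
def charInner (G : Type) [Group G] (α β : G → ℂ) : ℂ :=
  (Nat.card G : ℂ)⁻¹ * ∑ᶠ g : G, α g * (starRingEnd ℂ) (β g)


namespace SL2Aux
open Matrix Module

variable {F : Type} [Field F]

/-- upper unipotent matrix as element of SL(2,F) -/
def Tm (b : F) : Matrix.SpecialLinearGroup (Fin 2) F :=
  ⟨!![1, b; 0, 1], by simp [Matrix.det_fin_two_of]⟩

/-- the central element -1 -/
def zeta (F : Type) [Field F] : Matrix.SpecialLinearGroup (Fin 2) F :=
  ⟨-1, by simp [Matrix.det_neg]⟩

lemma Tm_val (b : F) : (Tm b).val = !![1, b; 0, 1] := rfl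
lemma zeta_val : (zeta F).val = -1 := rfl

lemma Tm_mul (b c : F) : Tm b * Tm c = Tm (b + c) := by
  ext i j
  rw [Matrix.SpecialLinearGroup.coe_mul]
  fin_cases i <;> fin_cases j <;>
    simp [Tm, Matrix.SpecialLinearGroup.coe_mul, Matrix.mul_apply, Fin.sum_univ_two] <;> ring

lemma Tm_zero : Tm (0 : F) = 1 := by
  ext i j
  fin_cases i <;> fin_cases j <;>
    simp [Tm, Matrix.SpecialLinearGroup.coe_one, Matrix.one_apply]

lemma Tm_pow (b : F) : ∀ n : ℕ, Tm b ^ n = Tm ((n : F) * b)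
  | 0 => by simp [Tm_zero]
  | (n+1) => by
      rw [pow_succ, Tm_pow b n, Tm_mul]
      push_cast
      ring_nf

lemma Tm_eq_one_iff {b : F} : Tm b = 1 ↔ b = 0 := by
  constructor
  · intro h
    have := congr_fun (congr_fun (congr_arg Subtype.val h) 0) 1
    simpa [Tm, Matrix.SpecialLinearGroup.coe_one, Matrix.one_apply] using this
  · rintro rfl; exact Tm_zero

lemma zeta_mul_comm (g : Matrix.SpecialLinearGroup (Fin 2) F) :
    zeta F * g = g * zeta F := by
  apply Subtype.ext
  show (-1 : Matrix (Fin 2) (Fin 2) F) * g.val = g.val * (-1)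
  rw [neg_one_mul, mul_neg_one]

lemma zeta_sq : zeta F * zeta F = 1 := by
  apply Subtype.ext
  show (-1 : Matrix (Fin 2) (Fin 2) F) * (-1) = 1
  rw [neg_mul_neg, one_mul]

lemma zeta_mem_center : zeta F ∈ Subgroup.center (Matrix.SpecialLinearGroup (Fin 2) F) :=
  Subgroup.mem_center_iff.mpr fun g => (zeta_mul_comm g).symm

lemma zeta_eq_one_iff : zeta F = 1 ↔ (2 : F) = 0 := by
  constructor
  · intro h
    have h2 := congr_fun (congr_fun (congr_arg Subtype.val h) 0) 0
    have : (-1 : F) = 1 := by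
      simpa [zeta, Matrix.SpecialLinearGroup.coe_one, Matrix.one_apply] using h2
    linear_combination -this
  · intro h2
    apply Subtype.ext
    have h1 : (-1 : F) = 1 := by linear_combination -h2
    show (-1 : Matrix (Fin 2) (Fin 2) F) = 1
    ext i j
    by_cases hij : i = j <;> simp [Matrix.one_apply, hij, h1]

lemma sq_fin_two (m : Matrix (Fin 2) (Fin 2) F) :
    m * m = (Matrix.trace m) • m - (Matrix.det m) • 1 := by
  ext i j
  fin_cases i <;> fin_cases j <;>
    simp [Matrix.mul_apply, Fin.sum_univ_two, Matrix.trace_fin_two, Matrix.det_fin_two,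
      Matrix.one_apply] <;> ring

lemma one_add_pow (w : Matrix (Fin 2) (Fin 2) F) (hw : w * w = 0) :
    ∀ n : ℕ, (1 + w) ^ n = 1 + (n : F) • w
  | 0 => by simp
  | (n+1) => by
      rw [pow_succ, one_add_pow w hw n, mul_add, mul_one, add_mul, one_mul, smul_mul_assoc, hw,
        smul_zero, add_zero]
      push_cast
      rw [add_smul, one_smul]
      abel

lemma det_one_add (w : Matrix (Fin 2) (Fin 2) F) (htr : Matrix.trace w = 0)
    (hdet : Matrix.det w = 0) : Matrix.det (1 + w) = 1 := by
  rw [Matrix.trace_fin_two] at htr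
  rw [Matrix.det_fin_two] at hdet
  rw [Matrix.det_fin_two]
  simp only [Matrix.add_apply, Matrix.one_apply]
  norm_num
  linear_combination htr + hdet

lemma centralizer_lemma (m g : Matrix (Fin 2) (Fin 2) F) (hm0 : m ≠ 0)
    (htr : Matrix.trace m = 0) (hdet : Matrix.det m = 0)
    (hc : g * m = m * g) (hg : Matrix.det g = 1) :
    ∃ α β : F, g = α • 1 + β • m ∧ α * α = 1 := by
  have hent := fun i j => (Matrix.ext_iff.mpr hc) i j
  have E1 := hent 0 0
  have E2 := hent 0 1
  have E3 := hent 1 0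
  have E4 := hent 1 1
  simp only [Matrix.mul_apply, Fin.sum_univ_two] at E1 E2 E3 E4
  rw [Matrix.trace_fin_two] at htr
  rw [Matrix.det_fin_two] at hdet
  rw [Matrix.det_fin_two] at hg
  by_cases hb : m 0 1 ≠ 0
  · refine ⟨g 0 0 - (g 0 1 / m 0 1) * m 0 0, g 0 1 / m 0 1, ?_, ?_⟩
    · ext i j
      fin_cases i <;> fin_cases j <;>
        simp only [Matrix.add_apply, Matrix.smul_apply, Matrix.one_apply, smul_eq_mul] <;>
        norm_num <;> field_simp
      · linear_combination -E1
      · linear_combination -E2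
    · field_simp
      linear_combination (m 0 1 ^ 2) * hg + (m 0 1 * g 0 0) * E2 - (m 0 1 * g 0 1) * E1 +
        (m 0 0 * g 0 1 ^ 2 - m 0 1 * g 0 0 * g 0 1) * htr - g 0 1 ^ 2 * hdet
  · push_neg at hb
    by_cases hcc : m 1 0 ≠ 0
    · refine ⟨g 0 0 - (g 1 0 / m 1 0) * m 0 0, g 1 0 / m 1 0, ?_, ?_⟩
      · ext i j
        fin_cases i <;> fin_cases j <;>
          simp only [Matrix.add_apply, Matrix.smul_apply, Matrix.one_apply, smul_eq_mul] <;>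
          norm_num <;> field_simp
        · linear_combination -E4
        · linear_combination E3
      · field_simp
        linear_combination (m 1 0 ^ 2) * hg - (m 1 0 * g 0 0) * E3 - (m 1 0 * g 1 0) * E4 +
          (m 0 0 * g 1 0 ^ 2 - m 1 0 * g 0 0 * g 1 0) * htr - g 1 0 ^ 2 * hdet
    · push_neg at hcc
      exfalso
      apply hm0
      have ha : m 0 0 = 0 := by
        have h1 : m 0 0 * m 0 0 = 0 := by
          rw [hb, hcc] at hdet
          linear_combination -hdet + m 0 0 * htr
        exact (mul_self_eq_zero).mp h1
      have hd : m 1 1 = 0 := by linear_combination htr - ha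
      ext i j
      fin_cases i <;> fin_cases j <;> simp [hb, hcc, ha, hd]

variable (p : ℕ) [Fact p.Prime] [CharP F p]

lemma orderOf_Tm {b : F} (hb : b ≠ 0) : orderOf (Tm b) = p := by
  apply orderOf_eq_prime
  · rw [Tm_pow, CharP.cast_eq_zero F p, zero_mul, Tm_zero]
  · rw [Ne, Tm_eq_one_iff]; exact hb

lemma p_dvd_orderOf_zeta_mul {b : F} (h2 : (2 : F) ≠ 0) (hb : b ≠ 0) :
    p ∣ orderOf (zeta F * Tm b) := by
  have hbb : b + b ≠ 0 := by
    intro h; apply hb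
    have : (2 : F) * b = 0 := by rw [two_mul]; exact h
    exact (mul_eq_zero.mp this).resolve_left h2
  have hx2 : (zeta F * Tm b) ^ 2 = Tm (b + b) := by
    have hc : Tm b * zeta F = zeta F * Tm b := (zeta_mul_comm _).symm
    rw [pow_two, mul_assoc, ← mul_assoc (Tm b), hc, mul_assoc, ← mul_assoc, zeta_sq, one_mul,
      Tm_mul]
  have key : Tm (b + b) ^ orderOf (zeta F * Tm b) = 1 := by
    rw [← hx2, ← pow_mul, mul_comm 2, pow_mul, pow_orderOf_eq_one, one_pow]
  have hdvd := orderOf_dvd_of_pow_eq_one key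
  rwa [orderOf_Tm p hbb] at hdvd

lemma orderOf_one_add (w : Matrix (Fin 2) (Fin 2) F) (hww : w * w = 0) (hw0 : w ≠ 0)
    (u : Matrix.SpecialLinearGroup (Fin 2) F) (hu : u.val = 1 + w) :
    orderOf u = p := by
  apply orderOf_eq_prime
  · apply Subtype.ext
    rw [Matrix.SpecialLinearGroup.coe_pow, Matrix.SpecialLinearGroup.coe_one, hu,
      one_add_pow w hww p, CharP.cast_eq_zero F p, zero_smul, add_zero]
  · intro h1
    apply hw0
    have h2 : 1 + w = 1 := by rw [← hu, h1]; rfl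
    rwa [add_eq_left] at h2

lemma psing [Finite F] (g : Matrix.SpecialLinearGroup (Fin 2) F) (hg : p ∣ orderOf g) :
    ∃ u : Matrix.SpecialLinearGroup (Fin 2) F,
      u ≠ 1 ∧ orderOf u = p ∧ (g = u ∨ g = zeta F * u) := by
  have hp : p.Prime := Fact.out
  have hnpos : 0 < orderOf g := orderOf_pos g
  have hordh : orderOf (g ^ (orderOf g / p)) = p := by
    rw [orderOf_pow, Nat.gcd_eq_right (Nat.div_dvd_of_dvd hg), Nat.div_div_self hg hnpos.ne']
  set h := g ^ (orderOf g / p) with hh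
  set m : Matrix (Fin 2) (Fin 2) F := h.val - 1 with hm
  have hm0 : m ≠ 0 := by
    intro h0
    have h1 : h = 1 := Subtype.ext (by rwa [hm, sub_eq_zero] at h0)
    rw [h1, orderOf_one] at hordh
    exact hp.ne_one hordh.symm
  have hval : h.val = 1 + m := by rw [hm]; abel
  have hmp : m ^ p = 0 := by
    have h1 : h.val ^ p = 1 := by
      have h2 := pow_orderOf_eq_one h
      rw [hordh] at h2
      calc h.val ^ p = (h ^ p).val := rfl
        _ = 1 := by rw [h2]; rfl
    have h3 := add_pow_char_of_commute p (Commute.one_left m)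
    rw [hval, h3, one_pow] at h1
    rwa [add_eq_left] at h1
  have hdetm : Matrix.det m = 0 := by
    have h1 : Matrix.det m ^ p = 0 := by
      rw [← Matrix.det_pow, hmp, Matrix.det_zero]
    exact (pow_eq_zero_iff hp.ne_zero).mp h1
  have htrm : Matrix.trace m = 0 := by
    have hpow : ∀ j : ℕ, m ^ (j + 1) = (Matrix.trace m) ^ j • m := by
      intro j
      induction j with
      | zero => simp
      | succ j ih =>
          rw [pow_succ, ih, smul_mul_assoc, sq_fin_two, hdetm, zero_smul, sub_zero, smul_smul,
            ← pow_succ]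
    have h1 := hpow (p - 1)
    have hps : p - 1 + 1 = p := by have := hp.two_le; omega
    rw [hps, hmp] at h1
    have h2 := (smul_eq_zero.mp h1.symm).resolve_right hm0
    exact (pow_eq_zero_iff (by have := hp.two_le; omega : p - 1 ≠ 0)).mp h2
  have hmm : m * m = 0 := by
    rw [sq_fin_two, hdetm, htrm]
    simp
  have hgm : g.val * m = m * g.val := by
    have h1 : g * h = h * g := ((Commute.refl g).pow_right _)
    have h2 : g.val * h.val = h.val * g.val := by
      calc g.val * h.val = (g * h).val := rfl
        _ = (h * g).val := by rw [h1]
        _ = h.val * g.val := rfl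
    rw [hm, mul_sub, sub_mul, mul_one, one_mul, h2]
  obtain ⟨α, β, hαβ, hα⟩ := centralizer_lemma m g.val hm0 htrm hdetm hgm g.prop
  have hα1 : α = 1 ∨ α = -1 := mul_self_eq_one_iff.mp hα
  have hzg : ∀ w : Matrix (Fin 2) (Fin 2) F, w = 0 → ¬ (g.val = 1 + w ∨ g.val = -(1 + w)) := by
    rintro w rfl (h1 | h1)
    · rw [add_zero] at h1
      have : g = 1 := Subtype.ext h1
      rw [this, orderOf_one] at hg
      exact hp.ne_one (Nat.dvd_one.mp hg)
    · rw [add_zero] at h1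
      have hgz : g = zeta F := Subtype.ext h1
      have hord2 : orderOf g ∣ 2 := orderOf_dvd_of_pow_eq_one (by rw [pow_two, hgz, zeta_sq])
      have hp2 : p = 2 := by
        have := hg.trans hord2
        exact (Nat.prime_dvd_prime_iff_eq hp Nat.prime_two).mp this
      have h2 : (2 : F) = 0 := by
        have := CharP.cast_eq_zero F p
        rw [hp2] at this
        exact_mod_cast this
      have : g = 1 := by rw [hgz, zeta_eq_one_iff.mpr h2]
      rw [this, orderOf_one] at hg
      exact hp.ne_one (Nat.dvd_one.mp hg)
  rcases hα1 with rfl | rfl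
  · -- g = 1 + β • m
    have hval' : g.val = 1 + β • m := by rw [hαβ, one_smul]
    have hww : (β • m) * (β • m) = 0 := by
      rw [smul_mul_assoc, mul_smul_comm, hmm, smul_zero, smul_zero]
    have hwne : β • m ≠ 0 := by
      intro h0
      exact hzg _ h0 (Or.inl hval')
    have hdetu : Matrix.det (1 + β • m) = 1 := hval' ▸ g.prop
    refine ⟨⟨1 + β • m, hdetu⟩, ?_, orderOf_one_add p _ hww hwne _ rfl, Or.inl (Subtype.ext hval')⟩
    intro h1
    apply hwne
    have h2 : 1 + β • m = 1 := congr_arg Subtype.val h1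
    rwa [add_eq_left] at h2
  · -- g = - (1 + (-β) • m)
    have hval' : g.val = -(1 + (-β) • m) := by
      rw [hαβ]
      module
    have hww : ((-β) • m) * ((-β) • m) = 0 := by
      rw [smul_mul_assoc, mul_smul_comm, hmm, smul_zero, smul_zero]
    have hwne : (-β) • m ≠ 0 := by
      intro h0
      exact hzg _ h0 (Or.inr hval')
    have hdetu : Matrix.det (1 + (-β) • m) = 1 := by
      apply det_one_add
      · rw [Matrix.trace_smul, htrm, smul_zero]
      · rw [Matrix.det_smul, hdetm, mul_zero]
    refine ⟨⟨1 + (-β) • m, hdetu⟩, ?_, orderOf_one_add p _ hww hwne _ rfl, Or.inr ?_⟩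
    · intro h1
      apply hwne
      have h2 : 1 + (-β) • m = 1 := congr_arg Subtype.val h1
      rwa [add_eq_left] at h2
    · apply Subtype.ext
      show g.val = (-1 : Matrix (Fin 2) (Fin 2) F) * (1 + (-β) • m)
      rw [hval', neg_one_mul]



lemma center_cases (z : Matrix.SpecialLinearGroup (Fin 2) F)
    (hz : z ∈ Subgroup.center (Matrix.SpecialLinearGroup (Fin 2) F)) :
    z = 1 ∨ z = zeta F := by
  obtain ⟨r, hr2, hrz⟩ := Matrix.SpecialLinearGroup.mem_center_iff.mp hz
  rw [Fintype.card_fin] at hr2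
  have hr : r = 1 ∨ r = -1 := by
    have : r * r = 1 := by rw [← pow_two]; exact hr2
    exact mul_self_eq_one_iff.mp this
  rcases hr with rfl | rfl
  · left
    apply Subtype.ext
    rw [← hrz]
    simp
  · right
    apply Subtype.ext
    rw [← hrz]
    show _ = (-1 : Matrix (Fin 2) (Fin 2) F)
    simp only [Matrix.scalar_apply]
    rw [← Matrix.diagonal_one, Matrix.diagonal_neg]

lemma idem_trace {M : Type*} [AddCommGroup M] [Module ℂ M] [FiniteDimensional ℂ M]
    (f : M →ₗ[ℂ] M) (hf : f * f = f) :
    ∃ r : ℕ, LinearMap.trace ℂ M f = r ∧ (r = 0 → f = 0) := by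
  have hproj : LinearMap.IsProj (LinearMap.range f) f := by
    refine ⟨fun x => LinearMap.mem_range_self f x, ?_⟩
    rintro x ⟨y, rfl⟩
    calc f (f y) = (f * f) y := rfl
      _ = f y := by rw [hf]
  refine ⟨finrank ℂ (LinearMap.range f), hproj.trace, ?_⟩
  intro h0
  have h1 : LinearMap.range f = ⊥ := Submodule.finrank_eq_zero.mp h0
  exact LinearMap.range_eq_bot.mp h1

lemma rho_zeta_one (V : FDRep ℂ (Matrix.SpecialLinearGroup (Fin 2) F))
    (h : V.character (zeta F) = V.character 1) : V.ρ (zeta F) = 1 := by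
  set A := V.ρ (zeta F) with hA
  have hA2 : A * A = 1 := by rw [hA, ← _root_.map_mul, zeta_sq, _root_.map_one]
  have h2A : (1 - A) * (1 - A) = (2 : ℂ) • (1 - A) := by
    have he : (1 - A) * (1 - A) = 1 - A - A + A * A := by noncomm_ring
    rw [he, hA2]
    module
  have hP : ((2⁻¹ : ℂ) • (1 - A)) * ((2⁻¹ : ℂ) • (1 - A)) = (2⁻¹ : ℂ) • (1 - A) := by
    rw [smul_mul_assoc, mul_smul_comm, h2A, smul_smul, smul_smul]
    norm_num
  have htrP : LinearMap.trace ℂ V ((2⁻¹ : ℂ) • (1 - A)) = 0 := by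
    rw [_root_.map_smul, map_sub, LinearMap.trace_one]
    have h1 : ((finrank ℂ V : ℂ)) = V.character 1 := (FDRep.char_one V).symm
    have h2 : LinearMap.trace ℂ V A = V.character (zeta F) := rfl
    rw [h1, h2, h, sub_self, smul_zero]
  obtain ⟨r, hr, h0⟩ := idem_trace _ hP
  have hr0 : r = 0 := by
    have : ((r : ℕ) : ℂ) = 0 := by rw [← hr, htrP]
    exact_mod_cast this
  have hP0 := h0 hr0
  have h1A : (1 : V →ₗ[ℂ] V) - A = 0 :=
    (smul_eq_zero.mp hP0).resolve_left (by norm_num)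
  have := sub_eq_zero.mp h1A
  exact this.symm

lemma idem_aux {M : Type*} [AddCommGroup M] [Module ℂ M] (B : M →ₗ[ℂ] M) (hB : B * B = 1)
    (c : ℂ) (hc : c * c = 1) :
    (1 + c • B) * (1 + c • B) = (2 : ℂ) • (1 + c • B) := by
  have h1 : (c • B) * (c • B) = (1 : M →ₗ[ℂ] M) := by
    rw [smul_mul_assoc, mul_smul_comm, hB, smul_smul, hc, one_smul]
  rw [add_mul, mul_add, mul_add, h1]
  simp only [one_mul, mul_one]
  rw [two_smul]
  abel

lemma smul_idem {M : Type*} [AddCommGroup M] [Module ℂ M] (f : M →ₗ[ℂ] M) (d : ℂ) (hd : d ≠ 0)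
    (hf : f * f = d • f) : (d⁻¹ • f) * (d⁻¹ • f) = d⁻¹ • f := by
  rw [smul_mul_assoc, mul_smul_comm, hf, smul_smul, smul_smul]
  congr 1
  field_simp

lemma forward_zeta (p : ℕ) [Fact p.Prime] [Fintype F] [CharP F p]
    (V : FDRep ℂ (Matrix.SpecialLinearGroup (Fin 2) F))
    (hPV : ∀ g : Matrix.SpecialLinearGroup (Fin 2) F, p ∣ orderOf g → V.character g = 0)
    (hz1 : zeta F ≠ 1)
    (hq : V.character 1 = (Fintype.card F : ℂ))
    (hodd : Odd (Fintype.card F)) :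
    V.character (zeta F) = V.character 1 := by
  have hp : p.Prime := Fact.out
  have h2F : (2 : F) ≠ 0 := fun h => hz1 (zeta_eq_one_iff.mpr h)
  set q' : ℂ := (Fintype.card F : ℂ) with hq'
  set s : ℂ := V.character (zeta F) with hs
  have hq0 : q' ≠ 0 := Nat.cast_ne_zero.mpr Fintype.card_ne_zero
  have h2q0 : (2 * q' : ℂ) ≠ 0 := by simp [hq0]
  have hA2 : V.ρ (zeta F) * V.ρ (zeta F) = 1 := by rw [← _root_.map_mul, zeta_sq, _root_.map_one]
  have hAN : V.ρ (zeta F) * (∑ b : F, V.ρ (Tm b)) = (∑ b : F, V.ρ (Tm b)) * V.ρ (zeta F) := by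
    rw [Finset.mul_sum, Finset.sum_mul]
    refine Finset.sum_congr rfl fun b _ => ?_
    rw [← _root_.map_mul, ← _root_.map_mul, zeta_mul_comm]
  have hNN : (∑ b : F, V.ρ (Tm b)) * (∑ b : F, V.ρ (Tm b)) = q' • (∑ b : F, V.ρ (Tm b)) := by
    rw [Finset.mul_sum]
    have hNT : ∀ c : F, (∑ b : F, V.ρ (Tm b)) * V.ρ (Tm c) = (∑ b : F, V.ρ (Tm b)) := by
      intro c
      rw [Finset.sum_mul]
      have h1 : ∀ b : F, V.ρ (Tm b) * V.ρ (Tm c) = V.ρ (Tm (b + c)) := fun b => by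
        rw [← _root_.map_mul, Tm_mul]
      rw [Finset.sum_congr rfl fun b _ => h1 b]
      exact Fintype.sum_equiv (Equiv.addRight c) _ _ (fun b => rfl)
    rw [Finset.sum_congr rfl fun c _ => hNT c, Finset.sum_const, Finset.card_univ, hq']
    rw [Nat.cast_smul_eq_nsmul]
  have htrN : LinearMap.trace ℂ V (∑ b : F, V.ρ (Tm b)) = q' := by
    rw [_root_.map_sum]
    have h2 : ∀ b ∈ (Finset.univ : Finset F), b ≠ 0 →
        LinearMap.trace ℂ V (V.ρ (Tm b)) = 0 := by
      intro b _ hb0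
      exact hPV _ (by rw [orderOf_Tm p hb0])
    rw [Finset.sum_eq_single 0 h2 (by simp)]
    show V.character (Tm 0) = q'
    rw [Tm_zero, hq]
  have htrAN : LinearMap.trace ℂ V (V.ρ (zeta F) * (∑ b : F, V.ρ (Tm b))) = s := by
    rw [Finset.mul_sum, _root_.map_sum]
    have h2 : ∀ b ∈ (Finset.univ : Finset F), b ≠ 0 →
        LinearMap.trace ℂ V (V.ρ (zeta F) * V.ρ (Tm b)) = 0 := by
      intro b _ hb0
      have h3 : V.ρ (zeta F) * V.ρ (Tm b) = V.ρ (zeta F * Tm b) := by rw [← _root_.map_mul]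
      rw [h3]
      exact hPV _ (p_dvd_orderOf_zeta_mul p h2F hb0)
    rw [Finset.sum_eq_single 0 h2 (by simp)]
    have h3 : V.ρ (zeta F) * V.ρ (Tm 0) = V.ρ (zeta F) := by rw [Tm_zero, _root_.map_one, mul_one]
    rw [h3, hs]
    rfl
  obtain ⟨N, hN⟩ : ∃ N, N = ∑ b : F, V.ρ (Tm b) := ⟨_, rfl⟩
  obtain ⟨A, hA⟩ : ∃ A, A = V.ρ (zeta F) := ⟨_, rfl⟩
  rw [← hA] at hA2
  rw [← hN, ← hA] at hAN htrAN
  rw [← hN] at hNN htrN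
  have hNA : ∀ c : ℂ, N * (1 + c • A) = (1 + c • A) * N := by
    intro c
    rw [mul_add, add_mul, mul_one, one_mul, mul_smul_comm, smul_mul_assoc, hAN]
  have hM : ∀ c : ℂ, c * c = 1 →
      ((1 + c • A) * N) * ((1 + c • A) * N) = (2 * q') • ((1 + c • A) * N) := by
    intro c hc
    calc ((1 + c • A) * N) * ((1 + c • A) * N)
        = (1 + c • A) * (N * (1 + c • A)) * N := by noncomm_ring
      _ = (1 + c • A) * ((1 + c • A) * N) * N := by rw [hNA]
      _ = ((1 + c • A) * (1 + c • A)) * (N * N) := by noncomm_ring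
      _ = ((2 : ℂ) • (1 + c • A)) * (q' • N) := by rw [idem_aux A hA2 c hc, hNN]
      _ = (2 * q') • ((1 + c • A) * N) := by
          rw [smul_mul_assoc, mul_smul_comm, smul_smul]
  have hE : ∀ c : ℂ, c * c = 1 →
      ((2 * q')⁻¹ • ((1 + c • A) * N)) * ((2 * q')⁻¹ • ((1 + c • A) * N))
        = (2 * q')⁻¹ • ((1 + c • A) * N) :=
    fun c hc => smul_idem _ _ h2q0 (hM c hc)
  have htrM : ∀ c : ℂ, LinearMap.trace ℂ V ((1 + c • A) * N) = q' + c * s := by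
    intro c
    have h1 : (1 + c • A) * N = N + c • (A * N) := by
      rw [add_mul, one_mul, smul_mul_assoc]
    rw [h1, _root_.map_add, _root_.map_smul, htrN, htrAN, smul_eq_mul]
  obtain ⟨rp, hrp, _⟩ := idem_trace _ (hE 1 (by norm_num))
  obtain ⟨rm, hrm, _⟩ := idem_trace _ (hE (-1) (by norm_num))
  rw [_root_.map_smul, htrM, smul_eq_mul] at hrp hrm
  have hsum : rp + rm = 1 := by
    have h1 : ((rp + rm : ℕ) : ℂ) = 1 := by
      push_cast
      rw [← hrp, ← hrm]
      field_simp
      ring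
    exact_mod_cast h1
  have hcase : rm = 0 ∨ rp = 0 := by omega
  rcases hcase with h0 | h0
  · rw [h0, Nat.cast_zero] at hrm
    have h3 : s = q' := by
      have h2 : q' + (-1) * s = 0 :=
        (mul_eq_zero.mp hrm).resolve_left (inv_ne_zero h2q0)
      linear_combination -h2
    rw [hq]
    exact h3
  · exfalso
    rw [h0, Nat.cast_zero] at hrp
    have h1 : s = -q' := by
      have h2 : q' + 1 * s = 0 :=
        (mul_eq_zero.mp hrp).resolve_left (inv_ne_zero h2q0)
      linear_combination h2
    have hPidem := smul_idem (1 + (1:ℂ) • A) 2 (by norm_num) (idem_aux A hA2 1 (by norm_num))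
    obtain ⟨r2, hr2, h02⟩ := idem_trace _ hPidem
    have htr2 : LinearMap.trace ℂ V ((2⁻¹ : ℂ) • (1 + (1:ℂ) • A)) = 0 := by
      rw [_root_.map_smul, _root_.map_add, LinearMap.trace_one, _root_.map_smul, smul_eq_mul, smul_eq_mul]
      have h4 : ((finrank ℂ V : ℂ)) = q' := by
        rw [← hq]
        exact (FDRep.char_one V).symm
      have h5 : LinearMap.trace ℂ V A = s := by rw [hs, hA]; rfl
      rw [h4, h5, h1]
      ring
    have hr20 : r2 = 0 := by
      have h6 : ((r2 : ℕ) : ℂ) = 0 := by rw [← hr2, htr2]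
      exact_mod_cast h6
    have hP0 := h02 hr20
    have hAneg : A = -1 := by
      have h6 : (1 : V →ₗ[ℂ] V) + (1:ℂ) • A = 0 :=
        (smul_eq_zero.mp hP0).resolve_left (by norm_num)
      rw [one_smul] at h6
      exact eq_neg_of_add_eq_zero_right h6
    -- determinant contradiction
    obtain ⟨ca, cb, hcd⟩ := CharP.sq_add_sq F p (-1)
    have hcd2 : ((ca : F)) ^ 2 + ((cb : F)) ^ 2 = -1 := by
      rw [hcd]
      push_cast
      ring
    have hdetb : Matrix.det !![(ca : F), (cb : F); (cb : F), -(ca : F)] = 1 := by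
      rw [Matrix.det_fin_two_of]
      linear_combination -hcd2
    obtain ⟨wm, hwm⟩ : ∃ w : Matrix.SpecialLinearGroup (Fin 2) F,
        w = ⟨!![0, 1; -1, 0], by simp [Matrix.det_fin_two_of]⟩ := ⟨_, rfl⟩
    obtain ⟨bm, hbm⟩ : ∃ w : Matrix.SpecialLinearGroup (Fin 2) F,
        w = ⟨!![(ca : F), (cb : F); (cb : F), -(ca : F)], hdetb⟩ := ⟨_, rfl⟩
    have hwb : wm * bm = zeta F * (bm * wm) := by
      ext i j
      rw [Matrix.SpecialLinearGroup.coe_mul, Matrix.SpecialLinearGroup.coe_mul,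
        Matrix.SpecialLinearGroup.coe_mul, hwm, hbm]
      fin_cases i <;> fin_cases j <;>
        simp [zeta, Matrix.SpecialLinearGroup.coe_mul, Matrix.mul_apply, Fin.sum_univ_two] <;>
        ring
    have hcomm : zeta F = wm * bm * wm⁻¹ * bm⁻¹ := by
      have h7 : wm * bm * wm⁻¹ * bm⁻¹ = (wm * bm) * (bm * wm)⁻¹ := by
        rw [_root_.mul_inv_rev]
        group
      rw [h7, hwb, mul_assoc, mul_inv_cancel, mul_one]
    have hdet1 : LinearMap.det A = 1 := by
      rw [hA, hcomm]
      simp only [_root_.map_mul]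
      have hx : ∀ x : Matrix.SpecialLinearGroup (Fin 2) F,
          LinearMap.det (V.ρ x) * LinearMap.det (V.ρ x⁻¹) = 1 := by
        intro x
        rw [← _root_.map_mul, ← _root_.map_mul, mul_inv_cancel, _root_.map_one, _root_.map_one]
      have h8 := hx wm
      have h9 := hx bm
      linear_combination (LinearMap.det (V.ρ bm) * LinearMap.det (V.ρ bm⁻¹)) * h8 + h9
    have hdet2 : LinearMap.det A = -1 := by
      rw [hAneg]
      have h8 : (-1 : V →ₗ[ℂ] V) = (-1 : ℂ) • 1 := by
        rw [neg_smul, one_smul]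
      rw [h8, LinearMap.det_smul, _root_.map_one, mul_one]
      have hfr : finrank ℂ V = Fintype.card F := by
        have h9 : ((finrank ℂ V : ℂ)) = q' := by
          rw [← hq]
          exact (FDRep.char_one V).symm
        rw [hq'] at h9
        exact_mod_cast h9
      rw [hfr]
      exact Odd.neg_one_pow hodd
    rw [hdet1] at hdet2
    norm_num at hdet2

end SL2Aux


/-- A reducible character `ψ` of `SL(2, F_q)` of degree `q` is `p`-vanishing iff it is
`Syl_p`-vanishing and `ψ(z) = ψ(1)` for every central element `z`. -/
theorem sl2_reducible_pVanishing_iff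
    (p k : ℕ) [Fact p.Prime] (hk : 1 ≤ k)
    (ψ : Matrix.SpecialLinearGroup (Fin 2) (GaloisField p k) → ℂ)
    (hψ : IsChar (Matrix.SpecialLinearGroup (Fin 2) (GaloisField p k)) ψ)
    (hred : ¬ IsIrredChar (Matrix.SpecialLinearGroup (Fin 2) (GaloisField p k)) ψ)
    (hdeg : ψ 1 = ((p ^ k : ℕ) : ℂ)) :
    PVanishing (Matrix.SpecialLinearGroup (Fin 2) (GaloisField p k)) p ψ ↔
      (SylPVanishing (Matrix.SpecialLinearGroup (Fin 2) (GaloisField p k)) p ψ ∧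
        ∀ z ∈ Subgroup.center (Matrix.SpecialLinearGroup (Fin 2) (GaloisField p k)),
          ψ z = ψ 1) := by
  classical
  obtain ⟨V, rfl⟩ := hψ
  haveI : Fintype (GaloisField p k) := Fintype.ofFinite _
  have hcard : Fintype.card (GaloisField p k) = p ^ k := by
    rw [← Nat.card_eq_fintype_card]
    exact GaloisField.card p k (by omega)
  have hq : V.character 1 = (Fintype.card (GaloisField p k) : ℂ) := by
    rw [hcard]; exact hdeg
  constructor
  · intro hPV
    refine ⟨?_, ?_⟩
    · intro g hg1 hord
      obtain ⟨m, hm⟩ := hord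
      apply hPV
      rw [hm]
      refine dvd_pow_self p ?_
      intro h0
      rw [h0, pow_zero] at hm
      exact hg1 (orderOf_eq_one_iff.mp hm)
    · intro z hz
      rcases SL2Aux.center_cases z hz with rfl | rfl
      · rfl
      · by_cases hz1 : SL2Aux.zeta (GaloisField p k) = 1
        · rw [hz1]
        · have h2F : (2 : GaloisField p k) ≠ 0 := fun h => hz1 (SL2Aux.zeta_eq_one_iff.mpr h)
          have hp2 : p ≠ 2 := by
            rintro rfl
            exact h2F (by exact_mod_cast CharP.cast_eq_zero (GaloisField 2 k) 2)
          have hodd : Odd (Fintype.card (GaloisField p k)) := by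
            rw [hcard]
            exact Odd.pow ((Fact.out : p.Prime).odd_of_ne_two hp2)
          exact SL2Aux.forward_zeta p V (fun g hg => hPV g hg) hz1 hq hodd
  · rintro ⟨hsyl, hcen⟩ g hg
    obtain ⟨u, hu1, hup, hgu⟩ := SL2Aux.psing p g hg
    have hpsu : V.character u = 0 := hsyl u hu1 ⟨1, by rw [hup, pow_one]⟩
    rcases hgu with rfl | rfl
    · exact hpsu
    · have hcz : V.character (SL2Aux.zeta (GaloisField p k)) = V.character 1 :=
        hcen _ SL2Aux.zeta_mem_center
      have hAz : V.ρ (SL2Aux.zeta (GaloisField p k)) = 1 := SL2Aux.rho_zeta_one V hcz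
      have h1 : V.character (SL2Aux.zeta (GaloisField p k) * u) = V.character u := by
        simp only [FDRep.character, _root_.map_mul, hAz, one_mul]
      rw [h1]
      exact hpsu
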